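/- Fix integers 1 ≤ c < s, m ≥ 1, and t with m/2 < t ≤ m. The number of functions a : Fin s → ℕ such that (i) the level sets S_k = {i : a(i) ≥ k} satisfy #S_k ≥ s − c + 1 for all 1 ≤ k ≤ t and S_{t+1} = ∅ (equivalently: a is a sum of indicators of t nested subsets each of size ≥ s−c+1), and (ii) Σ_{k=1}^{t} max(0, c − s + #S_k) = m, equals C(s, c−1) · C(m − t + c − 2, m − t). -/
import Mathlib

open Finset

private lemma card_multiset_eq_sum_count {α : Type*} [Fintype α] [DecidableEq α]
    (μ : Multiset α) : Multiset.card μ = ∑ i, μ.count i := by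
  rw [← Multiset.toFinset_sum_count_eq]
  exact Finset.sum_subset (Finset.subset_univ _) (fun x _ hx => by
    simpa [Multiset.count_eq_zero] using fun h => hx (Multiset.mem_toFinset.mpr h))

private lemma starsBars (k n : ℕ) :
    Nat.card {f : Fin k → ℕ // ∑ i, f i = n} = (k + n - 1).choose n := by
  classical
  let e : (Fin k → ℕ) ≃ Multiset (Fin k) :=
    Finsupp.equivFunOnFinite.symm.trans Multiset.toFinsupp.symm.toEquiv
  have hc : ∀ f : Fin k → ℕ, Multiset.card (e f) = ∑ i, f i := by
    intro f
    have h1 : Multiset.toFinsupp (α := Fin k) (e f) = Finsupp.equivFunOnFinite.symm f := by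
      simp [e]
    rw [card_multiset_eq_sum_count]
    refine Finset.sum_congr rfl fun i _ => ?_
    rw [← Multiset.toFinsupp_apply, h1]
    simp
  have e2 : {f : Fin k → ℕ // ∑ i, f i = n} ≃ Sym (Fin k) n :=
    Equiv.subtypeEquiv e (fun f => by rw [← hc f])
  rw [Nat.card_congr e2, Nat.card_eq_fintype_card, Sym.card_sym_eq_choose, Fintype.card_fin]

private noncomputable def fiberEquiv {α : Type*} [Fintype α] [DecidableEq α]
    (T : Finset α) (n : ℕ) :
    {f : α → ℕ // (∀ i ∉ T, f i = 0) ∧ ∑ i ∈ T, f i = n} ≃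
      {g : Fin T.card → ℕ // ∑ i, g i = n} := by
  have eT : {x // x ∈ T} ≃ Fin T.card := Fintype.equivFinOfCardEq (Fintype.card_coe T)
  refine Equiv.trans (β := {g : {x // x ∈ T} → ℕ // ∑ i, g i = n}) ?_ ?_
  · refine ⟨fun f => ⟨fun i => f.1 i.1, ?_⟩,
      fun g => ⟨fun i => if h : i ∈ T then g.1 ⟨i, h⟩ else 0, fun i hi => dif_neg hi, ?_⟩,
      ?_, ?_⟩
    · rw [Finset.sum_coe_sort T f.1]; exact f.2.2
    · calc ∑ i ∈ T, (if h : i ∈ T then g.1 ⟨i, h⟩ else 0)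
          = ∑ i ∈ T.attach, (if h : i.1 ∈ T then g.1 ⟨i.1, h⟩ else 0) :=
            (Finset.sum_attach T _).symm
        _ = ∑ i ∈ T.attach, g.1 i := by
            refine Finset.sum_congr rfl fun i _ => ?_
            rw [dif_pos i.2]
        _ = n := by rw [← Finset.univ_eq_attach]; exact g.2
    · intro f
      refine Subtype.ext (funext fun i => ?_)
      by_cases h : i ∈ T
      · simp [h]
      · simp [h, f.2.1 i h]
    · intro g
      refine Subtype.ext (funext fun i => ?_)
      simp
  · exact Equiv.subtypeEquiv (Equiv.arrowCongr eT (Equiv.refl ℕ)) (fun g => by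
      have hs : ∑ j, (Equiv.arrowCongr eT (Equiv.refl ℕ)) g j = ∑ i, g i :=
        Equiv.sum_comp eT.symm g
      rw [hs])

private def finSumEquiv {k l n : ℕ} (h : k = l) :
    {g : Fin k → ℕ // ∑ i, g i = n} ≃ {g : Fin l → ℕ // ∑ i, g i = n} := by
  subst h; exact Equiv.refl _

private lemma doubleCount {s t : ℕ} (a : Fin s → ℕ) (ha : ∀ i, a i ≤ t) :
    ∑ k ∈ Finset.Icc 1 t, (Finset.univ.filter (fun i => k ≤ a i)).card = ∑ i, a i := by
  classical
  simp_rw [Finset.card_filter]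
  rw [Finset.sum_comm]
  refine Finset.sum_congr rfl fun i _ => ?_
  rw [← Finset.card_filter]
  have hf : (Finset.Icc 1 t).filter (fun k => k ≤ a i) = Finset.Icc 1 (a i) := by
    ext k
    simp only [Finset.mem_filter, Finset.mem_Icc]
    have := ha i; omega
  rw [hf, Nat.card_Icc]
  omega

private lemma arith_fwd {t m u c Sa Stot Pts Ptc Ptu : ℕ}
    (h3 : Ptc + Stot - Pts = m) (hge : Pts ≤ Ptc + Stot)
    (hs2 : Sa + (Pts - Ptu) = Stot) (htu : Ptu ≤ Pts)
    (hu : u ≤ c - 1) (hc : 1 ≤ c) (ht1 : m < 2 * t) (ht2 : t ≤ m)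
    (hPtc : Ptc = t * c) (hPtu : Ptu = t * u) :
    u = c - 1 ∧ Sa = m - t := by
  have heq2 : Ptc + Sa = m + Ptu := by omega
  have huc : u = c - 1 := by
    by_contra hne
    have h2c : u + 2 ≤ c := by omega
    have hmul : t * (u + 2) ≤ t * c := Nat.mul_le_mul_left t h2c
    rw [Nat.mul_add, ← hPtu, ← hPtc] at hmul
    omega
  refine ⟨huc, ?_⟩
  have htc : Ptc = Ptu + t := by
    rw [hPtc, hPtu, huc]
    have h' : c = (c - 1) + 1 := by omega
    calc t * c = t * ((c - 1) + 1) := by rw [← h']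
      _ = t * (c - 1) + t := by ring
  omega

private lemma arith_rev {t m Ptc Ptc1 Pts Stot : ℕ}
    (hs2 : (m - t) + (Pts - Ptc1) = Stot) (htu : Ptc1 ≤ Pts)
    (htc : Ptc = Ptc1 + t) (ht2 : t ≤ m) : Ptc + Stot - Pts = m := by
  omega

private lemma charLem {s c m t : ℕ} (hc : 1 ≤ c) (hcs : c < s) (hm : 1 ≤ m)
    (ht1 : m < 2 * t) (ht2 : t ≤ m) (a : Fin s → ℕ) :
    ((∀ k, 1 ≤ k → k ≤ t →
        s - c + 1 ≤ (Finset.univ.filter (fun i => k ≤ a i)).card) ∧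
      (∀ i, a i ≤ t) ∧
      (∑ k ∈ Finset.Icc 1 t,
        (c + (Finset.univ.filter (fun i => k ≤ a i)).card - s)) = m)
    ↔ ((Finset.univ.filter (fun i => a i ≠ t)).card = c - 1 ∧
        ∑ i ∈ Finset.univ.filter (fun i => a i ≠ t), a i = m - t) := by
  classical
  have ht : 1 ≤ t := by omega
  set T : Finset (Fin s) := Finset.univ.filter (fun i => a i ≠ t) with hT
  have hpart : (Finset.univ.filter (fun i => a i = t)).card + T.card = s := by
    have h := Finset.card_filter_add_card_filter_not
      (s := (Finset.univ : Finset (Fin s))) (p := fun i => a i = t)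
    simpa [hT] using h
  have hTs : T.card ≤ s := by omega
  have hsplit : ∀ (hle : ∀ i, a i ≤ t),
      ∑ i ∈ T, a i + t * (s - T.card) = ∑ i, a i := by
    intro hle
    have h1 : ∑ i ∈ Finset.univ.filter (fun i => a i ≠ t), a i
        + ∑ i ∈ Finset.univ.filter (fun i => ¬ a i ≠ t), a i
        = ∑ i, a i := Finset.sum_filter_add_sum_filter_not _ _ _
    have h2 : ∑ i ∈ Finset.univ.filter (fun i => ¬ a i ≠ t), a i
        = t * (s - T.card) := by
      have hset : Finset.univ.filter (fun i : Fin s => ¬ a i ≠ t)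
          = Finset.univ.filter (fun i => a i = t) := by
        ext i; simp
      rw [hset, Finset.sum_congr rfl (fun i hi => (Finset.mem_filter.mp hi).2),
        Finset.sum_const, smul_eq_mul, Nat.mul_comm]
      congr 1
      omega
    rw [← hT, h2] at h1
    exact h1
  constructor
  · rintro ⟨h1, h2, h3⟩
    have hfilt : Finset.univ.filter (fun i => t ≤ a i)
        = Finset.univ.filter (fun i => a i = t) := by
      ext i
      simp only [Finset.mem_filter, Finset.mem_univ, true_and]
      have := h2 i; omega
    have hu : T.card ≤ c - 1 := by
      have := h1 t ht le_rfl
      rw [hfilt] at this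
      omega
    have hfg : ∀ k ∈ Finset.Icc 1 t,
        s ≤ c + (Finset.univ.filter (fun i => k ≤ a i)).card := by
      intro k hk
      rw [Finset.mem_Icc] at hk
      have := h1 k hk.1 hk.2
      omega
    rw [Finset.sum_tsub_distrib _ hfg] at h3
    have hA : ∑ k ∈ Finset.Icc 1 t, (c + (Finset.univ.filter (fun i => k ≤ a i)).card)
        = t * c + ∑ i, a i := by
      rw [Finset.sum_add_distrib, Finset.sum_const, Nat.card_Icc, doubleCount a h2]
      simp [smul_eq_mul]
    have hB : (∑ _k ∈ Finset.Icc 1 t, s) = t * s := by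
      rw [Finset.sum_const, Nat.card_Icc, smul_eq_mul]
      simp
    have hge : (∑ _k ∈ Finset.Icc 1 t, s)
        ≤ ∑ k ∈ Finset.Icc 1 t, (c + (Finset.univ.filter (fun i => k ≤ a i)).card) :=
      Finset.sum_le_sum hfg
    rw [hA, hB] at h3 hge
    have hms : t * (s - T.card) = t * s - t * T.card := Nat.mul_sub t s T.card
    have htu : t * T.card ≤ t * s := Nat.mul_le_mul_left t hTs
    have hs2 := hsplit h2
    rw [hms] at hs2
    exact arith_fwd h3 hge hs2 htu hu hc ht1 ht2 rfl rfl
  · rintro ⟨hcard, hsum⟩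
    have ha_le : ∀ i, a i ≤ t := by
      intro i
      by_cases h : a i = t
      · omega
      · have hiT : i ∈ T := by rw [hT]; simp [h]
        have := Finset.single_le_sum (f := a) (fun j _ => Nat.zero_le _) hiT
        omega
    have hcompl : (Finset.univ.filter (fun i => a i = t)).card = s - c + 1 := by
      omega
    have hi1 : ∀ k, 1 ≤ k → k ≤ t →
        s - c + 1 ≤ (Finset.univ.filter (fun i => k ≤ a i)).card := by
      intro k hk1 hk2
      have hsub : Finset.univ.filter (fun i => a i = t)
          ⊆ Finset.univ.filter (fun i => k ≤ a i) := by
        intro i hi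
        simp only [Finset.mem_filter, Finset.mem_univ, true_and] at hi ⊢
        omega
      have := Finset.card_le_card hsub
      omega
    refine ⟨hi1, ha_le, ?_⟩
    have hfg : ∀ k ∈ Finset.Icc 1 t,
        s ≤ c + (Finset.univ.filter (fun i => k ≤ a i)).card := by
      intro k hk
      rw [Finset.mem_Icc] at hk
      have := hi1 k hk.1 hk.2
      omega
    rw [Finset.sum_tsub_distrib _ hfg]
    have hA : ∑ k ∈ Finset.Icc 1 t, (c + (Finset.univ.filter (fun i => k ≤ a i)).card)
        = t * c + ∑ i, a i := by
      rw [Finset.sum_add_distrib, Finset.sum_const, Nat.card_Icc, doubleCount a ha_le]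
      simp [smul_eq_mul]
    have hB : (∑ _k ∈ Finset.Icc 1 t, s) = t * s := by
      rw [Finset.sum_const, Nat.card_Icc, smul_eq_mul]
      simp
    rw [hA, hB]
    have hs2 := hsplit ha_le
    rw [hcard, hsum] at hs2
    have hms : t * (s - (c - 1)) = t * s - t * (c - 1) := Nat.mul_sub t s (c - 1)
    rw [hms] at hs2
    have htu : t * (c - 1) ≤ t * s := Nat.mul_le_mul_left t (by omega)
    have htc : t * c = t * (c - 1) + t := by
      have h' : c = (c - 1) + 1 := by omega
      calc t * c = t * ((c - 1) + 1) := by rw [← h']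
        _ = t * (c - 1) + t := by ring
    exact arith_rev hs2 htu htc ht2

private noncomputable def mainEquiv (s n t c1 : ℕ) (hn : n < t) :
    {a : Fin s → ℕ // (Finset.univ.filter (fun i => a i ≠ t)).card = c1 ∧
        ∑ i ∈ Finset.univ.filter (fun i => a i ≠ t), a i = n}
    ≃ {q : {T : Finset (Fin s) // T.card = c1} × (Fin s → ℕ) //
        (∀ i ∉ q.1.1, q.2 i = 0) ∧ ∑ i ∈ q.1.1, q.2 i = n} where
  toFun a := ⟨(⟨Finset.univ.filter (fun i => a.1 i ≠ t), a.2.1⟩,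
      fun i => if a.1 i = t then 0 else a.1 i), by
    constructor
    · intro i hi
      simp only [Finset.mem_filter, Finset.mem_univ, true_and, not_not] at hi
      simp [hi]
    · rw [Finset.sum_congr rfl (fun i hi => if_neg (Finset.mem_filter.mp hi).2)]
      exact a.2.2⟩
  invFun q := ⟨fun i => if i ∈ q.1.1.1 then q.1.2 i else t, by
    have hval : ∀ i ∈ q.1.1.1, q.1.2 i < t := by
      intro i hi
      have h1 := Finset.single_le_sum (f := q.1.2) (fun j _ => Nat.zero_le _) hi
      have h2 := q.2.2
      omega
    have hTeq : (Finset.univ.filter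
        (fun i => (if i ∈ q.1.1.1 then q.1.2 i else t) ≠ t)) = q.1.1.1 := by
      ext i
      simp only [Finset.mem_filter, Finset.mem_univ, true_and]
      by_cases h : i ∈ q.1.1.1
      · simp only [h, if_true, iff_true]
        exact Nat.ne_of_lt (hval i h)
      · simp [h]
    constructor
    · rw [hTeq]; exact q.1.1.2
    · rw [hTeq, Finset.sum_congr rfl (fun i hi => if_pos hi)]
      exact q.2.2⟩
  left_inv a := Subtype.ext (funext fun i => by
    by_cases h : a.1 i = t
    · have hni : i ∉ Finset.univ.filter (fun j => a.1 j ≠ t) := by simp [h]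
      simp only [hni, if_false]
      exact h.symm
    · have hii : i ∈ Finset.univ.filter (fun j => a.1 j ≠ t) := by simp [h]
      simp only [hii, if_true, h, if_false])
  right_inv q := by
    have hval : ∀ i ∈ q.1.1.1, q.1.2 i < t := by
      intro i hi
      have h1 := Finset.single_le_sum (f := q.1.2) (fun j _ => Nat.zero_le _) hi
      have h2 := q.2.2
      omega
    have hTeq : (Finset.univ.filter
        (fun i => (if i ∈ q.1.1.1 then q.1.2 i else t) ≠ t)) = q.1.1.1 := by
      ext i
      simp only [Finset.mem_filter, Finset.mem_univ, true_and]
      by_cases h : i ∈ q.1.1.1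
      · simp only [h, if_true, iff_true]
        exact Nat.ne_of_lt (hval i h)
      · simp [h]
    apply Subtype.ext
    refine Prod.ext (Subtype.ext ?_) (funext fun i => ?_)
    · exact hTeq
    · by_cases h : i ∈ q.1.1.1
      · simp only [h, if_true]
        rw [if_neg (Nat.ne_of_lt (hval i h))]
      · simp only [h, if_false, if_pos rfl]
        exact (q.2.1 i h).symm

private lemma count_set (s c1 n t : ℕ) (hn : n < t) :
    Nat.card {a : Fin s → ℕ // (Finset.univ.filter (fun i => a i ≠ t)).card = c1 ∧
        ∑ i ∈ Finset.univ.filter (fun i => a i ≠ t), a i = n}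
      = s.choose c1 * (c1 + n - 1).choose n := by
  classical
  rw [Nat.card_congr (mainEquiv s n t c1 hn),
    Nat.card_congr (Equiv.subtypeProdEquivSigmaSubtype
      (fun (T : {T : Finset (Fin s) // T.card = c1}) (f : Fin s → ℕ) =>
        (∀ i ∉ T.1, f i = 0) ∧ ∑ i ∈ T.1, f i = n)),
    Nat.card_congr ((Equiv.sigmaCongrRight
      (fun T : {T : Finset (Fin s) // T.card = c1} =>
        (fiberEquiv T.1 n).trans (finSumEquiv T.2))).trans (Equiv.sigmaEquivProd _ _)),
    Nat.card_prod, Nat.card_eq_fintype_card, Fintype.card_finset_len, Fintype.card_fin,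
    starsBars]

theorem stmt_15 (s c m t : ℕ) (hc : 1 ≤ c) (hcs : c < s) (hm : 1 ≤ m)
    (ht1 : m < 2 * t) (ht2 : t ≤ m) :
    {a : Fin s → ℕ |
      (∀ k, 1 ≤ k → k ≤ t →
        s - c + 1 ≤ (Finset.univ.filter (fun i => k ≤ a i)).card) ∧
      (∀ i, a i ≤ t) ∧
      (∑ k ∈ Finset.Icc 1 t,
        (c + (Finset.univ.filter (fun i => k ≤ a i)).card - s)) = m}.ncard
    = Nat.choose s (c - 1) * Nat.choose (m - t + c - 2) (m - t) := by
  classical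
  rw [← Nat.card_coe_set_eq]
  have e0 : ↥{a : Fin s → ℕ |
      (∀ k, 1 ≤ k → k ≤ t →
        s - c + 1 ≤ (Finset.univ.filter (fun i => k ≤ a i)).card) ∧
      (∀ i, a i ≤ t) ∧
      (∑ k ∈ Finset.Icc 1 t,
        (c + (Finset.univ.filter (fun i => k ≤ a i)).card - s)) = m}
      ≃ {a : Fin s → ℕ // (Finset.univ.filter (fun i => a i ≠ t)).card = c - 1 ∧
        ∑ i ∈ Finset.univ.filter (fun i => a i ≠ t), a i = m - t} :=
    Equiv.subtypeEquiv (Equiv.refl _) (fun a => charLem hc hcs hm ht1 ht2 a)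
  rw [Nat.card_congr e0, count_set s (c - 1) (m - t) t (by omega)]
  congr 1
  have harg : c - 1 + (m - t) - 1 = m - t + c - 2 := by omega
  rw [harg]
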